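/- Fix g ≥ 2. Let A = [[1,1],[0,1]], B = [[1,0],[-1,1]] in M₂(ℚ), and let C ∈ M₄(ℚ) be the matrix with rows (1,0,0,0), (−1,1,1,0), (0,0,1,0), (1,0,−1,1). Define matrices Z₁,…,Z_{2g+1} ∈ M_{2g}(ℚ) by: Z_{2l} = I_{2l−2} ⊕ A ⊕ I_{2g−2l} for 1 ≤ l ≤ g; Z₁ = B ⊕ I_{2g−2}; Z_{2g+1} = I_{2g−2} ⊕ B; and Z_{2l+1} = I_{2l−2} ⊕ C ⊕ I_{2g−2l−2} for 1 ≤ l ≤ g−1. Then the space of matrices P ∈ M_{2g}(ℚ) satisfying Z_i P Z_iᵀ = P and Z_iᵀ P Z_i = P for all i = 1,…,2g+1 is one-dimensional, spanned by the block diagonal matrix J ⊕ J ⊕ ⋯ ⊕ J (g blocks), where J = [[0,−1],[1,0]]. -/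

import Mathlib

open Matrix

/-- The block-diagonal embedding `I_o ⊕ M ⊕ I_{2g-o-k}` of a `k × k` matrix `M` at offset `o`
inside `M_{2g}(ℚ)`: identity outside the block occupied by `M`. -/
def embedBlock (g k : ℕ) (M : Matrix (Fin k) (Fin k) ℚ) (o : ℕ) :
    Matrix (Fin (2 * g)) (Fin (2 * g)) ℚ :=
  fun i j =>
    if hi : o ≤ i.val ∧ i.val < o + k then
      if hj : o ≤ j.val ∧ j.val < o + k then
        M ⟨i.val - o, by omega⟩ ⟨j.val - o, by omega⟩
      else 0
    else if i = j then 1 else 0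

/-- The images `Z₁, …, Z_{2g+1}` of the Birman–Hilden generators of the hyperelliptic
mapping class group under the symplectic representation:
`Z_{2l} = I_{2l-2} ⊕ A ⊕ I_{2g-2l}` (`1 ≤ l ≤ g`), `Z₁ = B ⊕ I_{2g-2}`,
`Z_{2g+1} = I_{2g-2} ⊕ B`, `Z_{2l+1} = I_{2l-2} ⊕ C ⊕ I_{2g-2l-2}` (`1 ≤ l ≤ g-1`). -/
def birmanHildenZ (g : ℕ) (i : ℕ) : Matrix (Fin (2 * g)) (Fin (2 * g)) ℚ :=
  if i = 1 then embedBlock g 2 !![1, 0; -1, 1] 0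
  else if i = 2 * g + 1 then embedBlock g 2 !![1, 0; -1, 1] (2 * g - 2)
  else if i % 2 = 0 then embedBlock g 2 !![1, 1; 0, 1] (i - 2)
  else embedBlock g 4 !![1, 0, 0, 0; -1, 1, 1, 0; 0, 0, 1, 0; 1, 0, -1, 1] (i - 3)

/-- The block diagonal matrix `J ⊕ J ⊕ ⋯ ⊕ J` (`g` blocks) with `J = [[0,-1],[1,0]]`. -/
def blockJ (g : ℕ) : Matrix (Fin (2 * g)) (Fin (2 * g)) ℚ :=
  fun i j =>
    if i.val / 2 = j.val / 2 then
      (!![0, -1; 1, 0] : Matrix (Fin 2) (Fin 2) ℚ) ⟨i.val % 2, by omega⟩ ⟨j.val % 2, by omega⟩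
    else 0

/-! ### Auxiliary machinery -/

/-- indicator vector supported at position `a`. -/
def sv (n a : ℕ) : Fin n → ℚ := fun k => if k.val = a then 1 else 0

lemma valA : ∀ p q : Fin 2, (!![1, 1; 0, 1] : Matrix (Fin 2) (Fin 2) ℚ) p q
    = if p.val ≤ q.val then 1 else 0 := by
  intro p q; fin_cases p <;> fin_cases q <;> simp

lemma valB : ∀ p q : Fin 2, (!![1, 0; -1, 1] : Matrix (Fin 2) (Fin 2) ℚ) p q
    = if p.val = q.val then 1 else if p.val = 1 ∧ q.val = 0 then -1 else 0 := by
  intro p q; fin_cases p <;> fin_cases q <;> simp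

lemma valJ : ∀ p q : Fin 2, (!![0, -1; 1, 0] : Matrix (Fin 2) (Fin 2) ℚ) p q
    = if p.val = 0 ∧ q.val = 1 then -1 else if p.val = 1 ∧ q.val = 0 then 1 else 0 := by
  intro p q; fin_cases p <;> fin_cases q <;> simp

lemma valC : ∀ p q : Fin 4,
    (!![1, 0, 0, 0; -1, 1, 1, 0; 0, 0, 1, 0; 1, 0, -1, 1] : Matrix (Fin 4) (Fin 4) ℚ) p q
    = if p.val = q.val then 1
      else if p.val = 1 ∧ q.val = 0 then -1
      else if p.val = 1 ∧ q.val = 2 then 1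
      else if p.val = 3 ∧ q.val = 0 then 1
      else if p.val = 3 ∧ q.val = 2 then -1 else 0 := by
  intro p q; fin_cases p <;> fin_cases q <;> simp

lemma embedA (g o : ℕ) (h : o + 1 < 2 * g) :
    embedBlock g 2 !![1, 1; 0, 1] o = 1 + vecMulVec (sv (2 * g) o) (sv (2 * g) (o + 1)) := by
  ext i j
  simp only [embedBlock, Matrix.add_apply, one_apply, vecMulVec_apply, sv, valA, Fin.ext_iff]
  split_ifs <;> norm_num <;> omega

lemma embedB (g o : ℕ) (h : o + 1 < 2 * g) :
    embedBlock g 2 !![1, 0; -1, 1] o = 1 + vecMulVec (-sv (2 * g) (o + 1)) (sv (2 * g) o) := by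
  ext i j
  simp only [embedBlock, Matrix.add_apply, one_apply, vecMulVec_apply, sv, valB, Fin.ext_iff,
    Pi.neg_apply]
  split_ifs <;> norm_num <;> omega

lemma embedC (g o : ℕ) (h : o + 3 < 2 * g) :
    embedBlock g 4 !![1, 0, 0, 0; -1, 1, 1, 0; 0, 0, 1, 0; 1, 0, -1, 1] o =
      1 + vecMulVec (sv (2 * g) (o + 3) - sv (2 * g) (o + 1))
        (sv (2 * g) o - sv (2 * g) (o + 2)) := by
  ext i j
  simp only [embedBlock, Matrix.add_apply, one_apply, vecMulVec_apply, sv, valC, Fin.ext_iff,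
    Pi.sub_apply]
  split_ifs <;> norm_num <;> omega

lemma genA (g o : ℕ) (ho : o % 2 = 0) (h : o + 1 < 2 * g) :
    birmanHildenZ g (o + 2) = 1 + vecMulVec (sv (2 * g) o) (sv (2 * g) (o + 1)) := by
  rw [birmanHildenZ, if_neg (by omega), if_neg (by omega), if_pos (by omega),
    show o + 2 - 2 = o by omega, embedA g o h]

lemma genB1 (g : ℕ) (hg : 1 ≤ g) :
    birmanHildenZ g 1 = 1 + vecMulVec (-sv (2 * g) 1) (sv (2 * g) 0) := by
  rw [birmanHildenZ, if_pos rfl]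
  exact embedB g 0 (by omega)

lemma genB2 (g : ℕ) (hg : 1 ≤ g) :
    birmanHildenZ g (2 * g + 1)
      = 1 + vecMulVec (-sv (2 * g) (2 * g - 2 + 1)) (sv (2 * g) (2 * g - 2)) := by
  rw [birmanHildenZ, if_neg (by omega), if_pos rfl]
  exact embedB g (2 * g - 2) (by omega)

lemma genC (g o : ℕ) (ho : o % 2 = 0) (h : o + 3 < 2 * g) :
    birmanHildenZ g (o + 3)
      = 1 + vecMulVec (sv (2 * g) (o + 3) - sv (2 * g) (o + 1))
          (sv (2 * g) o - sv (2 * g) (o + 2)) := by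
  rw [birmanHildenZ, if_neg (by omega), if_neg (by omega), if_neg (by omega),
    show o + 3 - 3 = o by omega, embedC g o h]

lemma conj_expand {n : ℕ} (u v : Fin n → ℚ) (P : Matrix (Fin n) (Fin n) ℚ) :
    (1 + vecMulVec u v) * P * (1 + vecMulVec u v)ᵀ =
      P + Matrix.of (fun i j =>
        u i * vecMul v P j + P.mulVec v i * u j + (v ⬝ᵥ P.mulVec v) * (u i * u j)) := by
  have L1 : vecMulVec u v * P = Matrix.of (fun i j => u i * vecMul v P j) := by
    ext i j
    simp [mul_apply, vecMulVec_apply, vecMul, dotProduct, Finset.mul_sum, mul_assoc]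
  have L2 : P * (vecMulVec u v)ᵀ = Matrix.of (fun i j => P.mulVec v i * u j) := by
    ext i j
    simp only [mul_apply, transpose_apply, vecMulVec_apply, of_apply, mulVec, dotProduct,
      Finset.sum_mul]
    exact Finset.sum_congr rfl fun k _ => by ring
  have h3 : vecMulVec u v * P * (vecMulVec u v)ᵀ =
      Matrix.of (fun i j => (v ⬝ᵥ P.mulVec v) * (u i * u j)) := by
    ext i j
    simp only [mul_apply, vecMulVec_apply, transpose_apply, of_apply, mulVec, dotProduct,
      Finset.sum_mul, Finset.mul_sum]
    rw [Finset.sum_comm]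
    exact Finset.sum_congr rfl fun x _ => Finset.sum_congr rfl fun k _ => by ring
  calc (1 + vecMulVec u v) * P * (1 + vecMulVec u v)ᵀ
      = P + (vecMulVec u v * P + (P * (vecMulVec u v)ᵀ
          + vecMulVec u v * P * (vecMulVec u v)ᵀ)) := by
        rw [transpose_add, transpose_one]
        noncomm_ring
    _ = _ := by
        rw [h3, L1, L2]
        ext i j
        simp only [Matrix.add_apply, of_apply]
        ring

lemma conj_entry {n : ℕ} {u v : Fin n → ℚ} {P : Matrix (Fin n) (Fin n) ℚ}
    (hP : (1 + vecMulVec u v) * P * (1 + vecMulVec u v)ᵀ = P) (i j : Fin n) :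
    u i * vecMul v P j + P.mulVec v i * u j + (v ⬝ᵥ P.mulVec v) * (u i * u j) = 0 := by
  have h2 : P + Matrix.of (fun i j =>
      u i * vecMul v P j + P.mulVec v i * u j + (v ⬝ᵥ P.mulVec v) * (u i * u j)) = P := by
    rw [← conj_expand]; exact hP
  have h3 := congrArg (fun M : Matrix (Fin n) (Fin n) ℚ => M i j) h2
  simpa using h3

lemma conj_of_entries {n : ℕ} {u v : Fin n → ℚ} {P : Matrix (Fin n) (Fin n) ℚ}
    (h : ∀ i j : Fin n,
      u i * vecMul v P j + P.mulVec v i * u j + (v ⬝ᵥ P.mulVec v) * (u i * u j) = 0) :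
    (1 + vecMulVec u v) * P * (1 + vecMulVec u v)ᵀ = P := by
  rw [conj_expand]
  have : Matrix.of (fun i j =>
      u i * vecMul v P j + P.mulVec v i * u j + (v ⬝ᵥ P.mulVec v) * (u i * u j))
      = (0 : Matrix (Fin n) (Fin n) ℚ) := by
    ext i j; simpa using h i j
  rw [this, add_zero]

lemma transpose_form {n : ℕ} (u v : Fin n → ℚ) :
    (1 + vecMulVec u v)ᵀ = 1 + vecMulVec v u := by
  rw [transpose_add, transpose_one]
  congr 1
  ext i j
  simp [vecMulVec_apply, mul_comm]

lemma sum_ite_val {n a : ℕ} (h : a < n) (f : Fin n → ℚ) :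
    ∑ k : Fin n, (if k.val = a then f k else 0) = f ⟨a, h⟩ := by
  rw [Finset.sum_eq_single (⟨a, h⟩ : Fin n)]
  · simp
  · intro b _ hb
    simp only [ite_eq_right_iff]
    intro hv
    exact absurd (Fin.ext hv) hb
  · intro hmem
    exact absurd (Finset.mem_univ _) hmem

lemma sv_vecMul {n a : ℕ} (h : a < n) (P : Matrix (Fin n) (Fin n) ℚ) (j : Fin n) :
    vecMul (sv n a) P j = P ⟨a, h⟩ j := by
  simp only [vecMul, dotProduct, sv, ite_mul, one_mul, zero_mul]
  exact sum_ite_val h _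

lemma sv_mulVec {n a : ℕ} (h : a < n) (P : Matrix (Fin n) (Fin n) ℚ) (i : Fin n) :
    P.mulVec (sv n a) i = P i ⟨a, h⟩ := by
  simp only [mulVec, dotProduct, sv, mul_ite, mul_one, mul_zero]
  exact sum_ite_val h _

lemma sv_dot {n a : ℕ} (h : a < n) (w : Fin n → ℚ) :
    sv n a ⬝ᵥ w = w ⟨a, h⟩ := by
  simp only [dotProduct, sv, ite_mul, one_mul, zero_mul]
  exact sum_ite_val h _

lemma blockJ_apply (g : ℕ) (i j : Fin (2 * g)) :
    blockJ g i j = if i.val = j.val + 1 ∧ j.val % 2 = 0 then 1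
      else if j.val = i.val + 1 ∧ i.val % 2 = 0 then -1 else 0 := by
  simp only [blockJ, valJ]
  split_ifs <;> norm_num <;> omega

lemma factsA {n o : ℕ} (h : o + 1 < n) {P : Matrix (Fin n) (Fin n) ℚ}
    (h1 : (1 + vecMulVec (sv n o) (sv n (o + 1))) * P
        * (1 + vecMulVec (sv n o) (sv n (o + 1)))ᵀ = P)
    (h2 : (1 + vecMulVec (sv n o) (sv n (o + 1)))ᵀ * P
        * (1 + vecMulVec (sv n o) (sv n (o + 1))) = P) :
    (∀ j : Fin n, j.val ≠ o → P ⟨o + 1, h⟩ j = 0) ∧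
    (∀ i : Fin n, i.val ≠ o → P i ⟨o + 1, h⟩ = 0) ∧
    (∀ j : Fin n, j.val ≠ o + 1 → P ⟨o, by omega⟩ j = 0) ∧
    (∀ i : Fin n, i.val ≠ o + 1 → P i ⟨o, by omega⟩ = 0) ∧
    P ⟨o, by omega⟩ ⟨o + 1, h⟩ + P ⟨o + 1, h⟩ ⟨o, by omega⟩ = 0 := by
  have ho : o < n := by omega
  have E1 := conj_entry h1
  have h2' : (1 + vecMulVec (sv n (o + 1)) (sv n o)) * P
      * (1 + vecMulVec (sv n (o + 1)) (sv n o))ᵀ = P := by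
    rw [transpose_form]
    rw [transpose_form] at h2
    exact h2
  have E2 := conj_entry h2'
  simp only [sv_vecMul h, sv_mulVec h, sv_dot h, sv_vecMul ho, sv_mulVec ho, sv_dot ho] at E1 E2
  have item1 : ∀ j : Fin n, j.val ≠ o → P ⟨o + 1, h⟩ j = 0 := by
    intro j hj
    have := E1 ⟨o, ho⟩ j
    simp only [sv] at this
    rw [if_neg hj] at this
    norm_num at this
    linarith
  have item2 : ∀ i : Fin n, i.val ≠ o → P i ⟨o + 1, h⟩ = 0 := by
    intro i hi
    have := E1 i ⟨o, ho⟩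
    simp only [sv] at this
    rw [if_neg hi] at this
    norm_num at this
    linarith
  have item3 : ∀ j : Fin n, j.val ≠ o + 1 → P ⟨o, ho⟩ j = 0 := by
    intro j hj
    have := E2 ⟨o + 1, h⟩ j
    simp only [sv] at this
    rw [if_neg hj] at this
    norm_num at this
    linarith
  have item4 : ∀ i : Fin n, i.val ≠ o + 1 → P i ⟨o, ho⟩ = 0 := by
    intro i hi
    have := E2 i ⟨o + 1, h⟩
    simp only [sv] at this
    rw [if_neg hi] at this
    norm_num at this
    linarith
  have item5 : P ⟨o, ho⟩ ⟨o + 1, h⟩ + P ⟨o + 1, h⟩ ⟨o, ho⟩ = 0 := by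
    have hd : P ⟨o + 1, h⟩ ⟨o + 1, h⟩ = 0 := item1 _ (by simp)
    have := E1 ⟨o, ho⟩ ⟨o, ho⟩
    simp only [sv] at this
    rw [hd] at this
    norm_num at this
    linarith
  exact ⟨item1, item2, item3, item4, item5⟩

lemma factC {n o : ℕ} (h : o + 3 < n) {P : Matrix (Fin n) (Fin n) ℚ}
    (h1 : (1 + vecMulVec (sv n (o + 3) - sv n (o + 1)) (sv n o - sv n (o + 2))) * P
        * (1 + vecMulVec (sv n (o + 3) - sv n (o + 1)) (sv n o - sv n (o + 2)))ᵀ = P) :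
    P ⟨o + 2, by omega⟩ ⟨o + 3, by omega⟩ + P ⟨o + 1, by omega⟩ ⟨o, by omega⟩
      = P ⟨o, by omega⟩ ⟨o + 3, by omega⟩ + P ⟨o + 1, by omega⟩ ⟨o + 2, by omega⟩
        + (P ⟨o, by omega⟩ ⟨o, by omega⟩ - P ⟨o, by omega⟩ ⟨o + 2, by omega⟩
          - P ⟨o + 2, by omega⟩ ⟨o, by omega⟩ + P ⟨o + 2, by omega⟩ ⟨o + 2, by omega⟩) := by
  have h0 : o < n := by omega
  have h1' : o + 1 < n := by omega
  have h2' : o + 2 < n := by omega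
  have E := conj_entry h1 ⟨o + 1, h1'⟩ ⟨o + 3, h⟩
  simp only [Matrix.sub_vecMul, Matrix.mulVec_sub, sub_dotProduct, Pi.sub_apply,
    sv_vecMul h0, sv_vecMul h2', sv_mulVec h0, sv_mulVec h2', sv_dot h0, sv_dot h2', sv] at E
  norm_num at E
  linarith

lemma rowJ_even {g a : ℕ} (ha2 : a % 2 = 0) (h : a + 1 < 2 * g) (c : ℚ) :
    vecMul (sv (2 * g) a) (c • blockJ g) = fun j => -c * sv (2 * g) (a + 1) j := by
  funext j
  rw [sv_vecMul (show a < 2 * g by omega)]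
  simp only [Matrix.smul_apply, blockJ_apply, smul_eq_mul, sv, Fin.val_mk]
  split_ifs
  all_goals try ring
  all_goals exfalso
  all_goals omega


lemma rowJ_odd {g a : ℕ} (ha2 : a % 2 = 0) (h : a + 1 < 2 * g) (c : ℚ) :
    vecMul (sv (2 * g) (a + 1)) (c • blockJ g) = fun j => c * sv (2 * g) a j := by
  funext j
  rw [sv_vecMul h]
  simp only [Matrix.smul_apply, blockJ_apply, smul_eq_mul, sv, Fin.val_mk]
  split_ifs
  all_goals try ring
  all_goals exfalso
  all_goals omega

lemma colJ_even {g a : ℕ} (ha2 : a % 2 = 0) (h : a + 1 < 2 * g) (c : ℚ) :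
    (c • blockJ g).mulVec (sv (2 * g) a) = fun i => c * sv (2 * g) (a + 1) i := by
  funext i
  rw [sv_mulVec (show a < 2 * g by omega)]
  simp only [Matrix.smul_apply, blockJ_apply, smul_eq_mul, sv, Fin.val_mk]
  split_ifs
  all_goals try ring
  all_goals exfalso
  all_goals omega

lemma colJ_odd {g a : ℕ} (ha2 : a % 2 = 0) (h : a + 1 < 2 * g) (c : ℚ) :
    (c • blockJ g).mulVec (sv (2 * g) (a + 1)) = fun i => -c * sv (2 * g) a i := by
  funext i
  rw [sv_mulVec h]
  simp only [Matrix.smul_apply, blockJ_apply, smul_eq_mul, sv, Fin.val_mk]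
  split_ifs
  all_goals try ring
  all_goals exfalso
  all_goals omega

lemma conj_of_entries' {n : ℕ} {u v : Fin n → ℚ} {P : Matrix (Fin n) (Fin n) ℚ}
    (h : ∀ i j : Fin n,
      v i * vecMul u P j + P.mulVec u i * v j + (u ⬝ᵥ P.mulVec u) * (v i * v j) = 0) :
    (1 + vecMulVec u v)ᵀ * P * (1 + vecMulVec u v) = P := by
  rw [transpose_form, ← transpose_form v u]
  exact conj_of_entries h

lemma revA {g a : ℕ} (ha2 : a % 2 = 0) (h : a + 1 < 2 * g) (c : ℚ) :
    (1 + vecMulVec (sv (2 * g) a) (sv (2 * g) (a + 1))) * (c • blockJ g)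
        * (1 + vecMulVec (sv (2 * g) a) (sv (2 * g) (a + 1)))ᵀ = c • blockJ g ∧
    (1 + vecMulVec (sv (2 * g) a) (sv (2 * g) (a + 1)))ᵀ * (c • blockJ g)
        * (1 + vecMulVec (sv (2 * g) a) (sv (2 * g) (a + 1))) = c • blockJ g := by
  constructor
  · apply conj_of_entries
    intro i j
    simp only [rowJ_odd ha2 h c, colJ_odd ha2 h c, sv_dot h, sv, Fin.val_mk]
    split_ifs
    all_goals try ring
    all_goals exfalso
    all_goals omega
  · apply conj_of_entries'
    intro i j
    simp only [rowJ_even ha2 h c, colJ_even ha2 h c, sv_dot (show a < 2 * g by omega), sv,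
      Fin.val_mk]
    split_ifs
    all_goals try ring
    all_goals exfalso
    all_goals omega

lemma revB {g a : ℕ} (ha2 : a % 2 = 0) (h : a + 1 < 2 * g) (c : ℚ) :
    (1 + vecMulVec (-sv (2 * g) (a + 1)) (sv (2 * g) a)) * (c • blockJ g)
        * (1 + vecMulVec (-sv (2 * g) (a + 1)) (sv (2 * g) a))ᵀ = c • blockJ g ∧
    (1 + vecMulVec (-sv (2 * g) (a + 1)) (sv (2 * g) a))ᵀ * (c • blockJ g)
        * (1 + vecMulVec (-sv (2 * g) (a + 1)) (sv (2 * g) a)) = c • blockJ g := by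
  constructor
  · apply conj_of_entries
    intro i j
    simp only [rowJ_even ha2 h c, colJ_even ha2 h c, sv_dot (show a < 2 * g by omega),
      Pi.neg_apply, sv, Fin.val_mk]
    split_ifs
    all_goals try ring
    all_goals exfalso
    all_goals omega
  · apply conj_of_entries'
    intro i j
    simp only [Matrix.neg_vecMul, Matrix.mulVec_neg, neg_dotProduct,
      dotProduct_neg, Pi.neg_apply, rowJ_odd ha2 h c, colJ_odd ha2 h c, sv_dot h, sv,
      Fin.val_mk]
    split_ifs
    all_goals try ring
    all_goals exfalso
    all_goals omega

lemma revC {g a : ℕ} (ha2 : a % 2 = 0) (h : a + 3 < 2 * g) (c : ℚ) :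
    (1 + vecMulVec (sv (2 * g) (a + 3) - sv (2 * g) (a + 1))
        (sv (2 * g) a - sv (2 * g) (a + 2))) * (c • blockJ g)
      * (1 + vecMulVec (sv (2 * g) (a + 3) - sv (2 * g) (a + 1))
          (sv (2 * g) a - sv (2 * g) (a + 2)))ᵀ = c • blockJ g ∧
    (1 + vecMulVec (sv (2 * g) (a + 3) - sv (2 * g) (a + 1))
        (sv (2 * g) a - sv (2 * g) (a + 2)))ᵀ * (c • blockJ g)
      * (1 + vecMulVec (sv (2 * g) (a + 3) - sv (2 * g) (a + 1))
          (sv (2 * g) a - sv (2 * g) (a + 2))) = c • blockJ g := by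
  rw [show a + 3 = a + 2 + 1 from by omega]
  have ha2' : (a + 2) % 2 = 0 := by omega
  have h' : a + 2 + 1 < 2 * g := by omega
  have h1 : a + 1 < 2 * g := by omega
  have ha : a < 2 * g := by omega
  have ha2'' : a + 2 < 2 * g := by omega
  have hs : (sv (2 * g) a - sv (2 * g) (a + 2)) ⬝ᵥ
      ((c • blockJ g).mulVec (sv (2 * g) a - sv (2 * g) (a + 2))) = 0 := by
    simp only [Matrix.mulVec_sub, sub_dotProduct, dotProduct_sub, Pi.sub_apply,
      colJ_even ha2 h1 c, colJ_even ha2' h' c, sv_dot ha, sv_dot ha2'', sv, Fin.val_mk]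
    norm_num
    all_goals (intro hcon; exact absurd hcon (by omega))
  have hs' : (sv (2 * g) (a + 2 + 1) - sv (2 * g) (a + 1)) ⬝ᵥ
      ((c • blockJ g).mulVec (sv (2 * g) (a + 2 + 1) - sv (2 * g) (a + 1))) = 0 := by
    simp only [Matrix.mulVec_sub, sub_dotProduct, dotProduct_sub, Pi.sub_apply,
      colJ_odd ha2 h1 c, colJ_odd ha2' h' c, sv_dot h1, sv_dot h', sv, Fin.val_mk]
    norm_num
    all_goals (intro hcon; exact absurd hcon (by omega))
  constructor
  · apply conj_of_entries
    intro i j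
    rw [hs]
    simp only [Matrix.sub_vecMul, Matrix.mulVec_sub, Pi.sub_apply,
      rowJ_even ha2 h1 c, rowJ_even ha2' h' c, colJ_even ha2 h1 c, colJ_even ha2' h' c]
    ring
  · apply conj_of_entries'
    intro i j
    rw [hs']
    simp only [Matrix.sub_vecMul, Matrix.mulVec_sub, Pi.sub_apply,
      rowJ_odd ha2 h1 c, rowJ_odd ha2' h' c, colJ_odd ha2 h1 c, colJ_odd ha2' h' c]
    ring

lemma Pmk {n : ℕ} (P : Matrix (Fin n) (Fin n) ℚ) {a b a' b' : ℕ} (e1 : a = a') (e2 : b = b')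
    (ha : a < n) (hb : b < n) :
    P ⟨a, ha⟩ ⟨b, hb⟩ = P ⟨a', e1 ▸ ha⟩ ⟨b', e2 ▸ hb⟩ := by
  subst e1; subst e2; rfl

theorem birmanHilden_invariants (g : ℕ) (hg : 2 ≤ g) :
    {P : Matrix (Fin (2 * g)) (Fin (2 * g)) ℚ |
        ∀ i : ℕ, 1 ≤ i → i ≤ 2 * g + 1 →
          birmanHildenZ g i * P * (birmanHildenZ g i)ᵀ = P ∧
          (birmanHildenZ g i)ᵀ * P * birmanHildenZ g i = P} =
      Set.range (fun c : ℚ => c • blockJ g) ∧ blockJ g ≠ 0 := by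
  constructor
  · ext P
    simp only [Set.mem_setOf_eq, Set.mem_range]
    constructor
    · intro hP
      have hfA : ∀ o : ℕ, o % 2 = 0 → ∀ (h : o + 1 < 2 * g),
          (∀ j : Fin (2 * g), j.val ≠ o → P ⟨o + 1, h⟩ j = 0) ∧
          (∀ i : Fin (2 * g), i.val ≠ o → P i ⟨o + 1, h⟩ = 0) ∧
          (∀ j : Fin (2 * g), j.val ≠ o + 1 → P ⟨o, by omega⟩ j = 0) ∧
          (∀ i : Fin (2 * g), i.val ≠ o + 1 → P i ⟨o, by omega⟩ = 0) ∧
          P ⟨o, by omega⟩ ⟨o + 1, h⟩ + P ⟨o + 1, h⟩ ⟨o, by omega⟩ = 0 := by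
        intro o ho h
        have h12 := hP (o + 2) (by omega) (by omega)
        rw [genA g o ho h] at h12
        exact factsA h h12.1 h12.2
      have hch : ∀ o : ℕ, o % 2 = 0 → ∀ (h : o + 3 < 2 * g),
          P ⟨o + 3, by omega⟩ ⟨o + 2, by omega⟩ = P ⟨o + 1, by omega⟩ ⟨o, by omega⟩ := by
        intro o ho h
        have h12 := hP (o + 3) (by omega) (by omega)
        rw [genC g o ho h] at h12
        have E := factC h h12.1
        obtain ⟨A1, A2, A3, A4, A5⟩ := hfA o ho (by omega)
        obtain ⟨B1, B2, B3, B4, B5⟩ := hfA (o + 2) (by omega) (by omega)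
        have z1 : P ⟨o, by omega⟩ ⟨o + 3, by omega⟩ = 0 := A3 ⟨o + 3, by omega⟩ (by simp)
        have z2 : P ⟨o + 1, by omega⟩ ⟨o + 2, by omega⟩ = 0 := A1 ⟨o + 2, by omega⟩ (by simp)
        have z3 : P ⟨o, by omega⟩ ⟨o, by omega⟩ = 0 := A3 ⟨o, by omega⟩ (by simp)
        have z4 : P ⟨o, by omega⟩ ⟨o + 2, by omega⟩ = 0 := A3 ⟨o + 2, by omega⟩ (by simp)
        have z5 : P ⟨o + 2, by omega⟩ ⟨o, by omega⟩ = 0 := A4 ⟨o + 2, by omega⟩ (by simp)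
        have z6 : P ⟨o + 2, by omega⟩ ⟨o + 2, by omega⟩ = 0 := B3 ⟨o + 2, by omega⟩ (by simp)
        rw [Pmk P (rfl : o + 2 = o + 2) (show o + 2 + 1 = o + 3 from by omega),
          Pmk P (show o + 2 + 1 = o + 3 from by omega) (rfl : o + 2 = o + 2)] at B5
        linarith [E, B5, z1, z2, z3, z4, z5, z6]
      have hconst : ∀ l : ℕ, ∀ (h : 2 * l + 1 < 2 * g),
          P ⟨2 * l + 1, h⟩ ⟨2 * l, by omega⟩ = P ⟨1, by omega⟩ ⟨0, by omega⟩ := by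
        intro l
        induction l with
        | zero =>
          intro h
          exact Pmk P (by norm_num) (by norm_num) _ (by omega)
        | succ m ih =>
          intro h
          rw [Pmk P (show 2 * (m + 1) + 1 = 2 * m + 3 from by omega)
            (show 2 * (m + 1) = 2 * m + 2 from by omega)]
          rw [hch (2 * m) (by omega) (by omega)]
          exact ih (by omega)
      refine ⟨P ⟨1, by omega⟩ ⟨0, by omega⟩, ?_⟩
      ext i j
      simp only [Matrix.smul_apply, smul_eq_mul, blockJ_apply]
      by_cases hpar : i.val % 2 = 0
      · by_cases hij : j.val = i.val + 1
        · rw [if_neg (by omega), if_pos (by exact ⟨hij, hpar⟩)]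
          obtain ⟨A1, A2, A3, A4, A5⟩ := hfA i.val hpar (by omega)
          have hc := hconst (i.val / 2) (by omega)
          rw [Pmk P (show 2 * (i.val / 2) + 1 = i.val + 1 from by omega)
            (show 2 * (i.val / 2) = i.val from by omega)] at hc
          have hj' : j = ⟨i.val + 1, by omega⟩ := Fin.ext hij
          rw [hj']
          have hA5 : P ⟨i.val, i.isLt⟩ ⟨i.val + 1, by omega⟩
              + P ⟨i.val + 1, by omega⟩ ⟨i.val, i.isLt⟩ = 0 := A5
          have hcc : P ⟨i.val + 1, by omega⟩ ⟨i.val, i.isLt⟩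
              = P ⟨1, by omega⟩ ⟨0, by omega⟩ := hc
          have : P i ⟨i.val + 1, by omega⟩ = P ⟨i.val, i.isLt⟩ ⟨i.val + 1, by omega⟩ := rfl
          rw [this]
          linarith [hA5, hcc]
        · rw [if_neg (by omega), if_neg (by omega), mul_zero]
          obtain ⟨A1, A2, A3, A4, A5⟩ := hfA i.val hpar (by omega)
          exact (A3 j (by omega)).symm
      · by_cases hij : i.val = j.val + 1
        · rw [if_pos (by exact ⟨hij, by omega⟩)]
          have hc := hconst (j.val / 2) (by omega)
          rw [Pmk P (show 2 * (j.val / 2) + 1 = j.val + 1 from by omega)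
            (show 2 * (j.val / 2) = j.val from by omega)] at hc
          have hi' : i = ⟨j.val + 1, by omega⟩ := Fin.ext hij
          rw [mul_one, hi']
          have : P ⟨j.val + 1, by omega⟩ j = P ⟨j.val + 1, by omega⟩ ⟨j.val, j.isLt⟩ := rfl
          rw [this]
          exact hc.symm
        · rw [if_neg (by omega), if_neg (by omega), mul_zero]
          obtain ⟨A1, A2, A3, A4, A5⟩ := hfA (i.val - 1) (by omega) (by omega)
          have hi' : (⟨i.val - 1 + 1, by omega⟩ : Fin (2 * g)) = i := Fin.ext (by simp; omega)
          have h0 := A1 j (by omega)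
          rw [hi'] at h0
          exact h0.symm
    · rintro ⟨c, rfl⟩
      intro k hk1 hk2
      by_cases hk1' : k = 1
      · subst hk1'
        rw [genB1 g (by omega)]
        exact revB (g := g) (a := 0) (by norm_num) (by omega) c
      · by_cases hk2' : k = 2 * g + 1
        · subst hk2'
          rw [genB2 g (by omega)]
          exact revB (show (2 * g - 2) % 2 = 0 by omega) (by omega) c
        · by_cases hk3 : k % 2 = 0
          · obtain ⟨m, rfl⟩ : ∃ m, k = m + 2 := ⟨k - 2, by omega⟩
            rw [genA g m (by omega) (by omega)]
            exact revA (by omega) (by omega) c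
          · obtain ⟨m, rfl⟩ : ∃ m, k = m + 3 := ⟨k - 3, by omega⟩
            rw [genC g m (by omega) (by omega)]
            exact revC (by omega) (by omega) c
  · intro h0
    have h1 : blockJ g ⟨1, by omega⟩ ⟨0, by omega⟩ = 1 := by
      rw [blockJ_apply]
      norm_num
    rw [h0] at h1
    simp at h1
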